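/- For ε ∈ (0, 1/2), the Gaussian margin is strictly smaller than the distributionally robust (Cantelli) margin: Φ⁻¹(1−ε) < √((1−ε)/ε). Hence the Gaussian-based chance constraint reformulation is less conservative than the moment-based robust reformulation. -/

import Mathlib

open MeasureTheory ProbabilityTheory

/-- CDF of the standard normal distribution. -/
noncomputable def stdNormalCDF : ℝ → ℝ := fun x => ProbabilityTheory.cdf (gaussianReal 0 1) x

/-- Quantile function (inverse CDF) of the standard normal distribution. -/
noncomputable def PhiInv (p : ℝ) : ℝ := sSup {x : ℝ | stdNormalCDF x ≤ p}

open Real Filter Set Topology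

lemma gaussPDF01 (t : ℝ) :
    gaussianPDFReal 0 1 t = (Real.sqrt (2 * π))⁻¹ * Real.exp (-(1/2) * t ^ 2) := by
  simp only [gaussianPDFReal, NNReal.coe_one, mul_one, sub_zero]
  ring_nf

lemma tail_int_aux {z : ℝ} :
    ∫ t in Set.Ioi z, t * Real.exp (-(1/2) * t ^ 2) = Real.exp (-(1/2) * z ^ 2) := by
  have h := MeasureTheory.integral_Ioi_of_hasDerivAt_of_tendsto'
      (f := fun t : ℝ => -Real.exp (-(1/2) * t ^ 2))
      (f' := fun t : ℝ => t * Real.exp (-(1/2) * t ^ 2)) (a := z) (m := 0)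
      ?_ ?_ ?_
  · rw [h]; ring
  · intro x _
    have h1 : HasDerivAt (fun t : ℝ => -(1/2) * t ^ 2) (-(1/2) * (2 * x)) x := by
      simpa using (hasDerivAt_pow 2 x).const_mul (-(1/2) : ℝ)
    have := (h1.exp).neg
    convert this using 1
    · rfl
    · ring
  · have : Integrable (fun t : ℝ => t * Real.exp (-(1/2) * t ^ 2)) := by
      have := integrable_mul_exp_neg_mul_sq (b := (1/2 : ℝ)) (by norm_num)
      simpa [neg_mul] using this
    exact this.integrableOn
  · have h2 : Tendsto (fun t : ℝ => (1/2) * t ^ 2) atTop atTop := by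
      exact (tendsto_pow_atTop (two_ne_zero)).const_mul_atTop (by norm_num)
    have h3 : Tendsto (fun t : ℝ => Real.exp (-((1/2) * t ^ 2))) atTop (𝓝 0) :=
      Real.tendsto_exp_neg_atTop_nhds_zero.comp h2
    have h4 : Tendsto (fun t : ℝ => -Real.exp (-((1/2) * t ^ 2))) atTop (𝓝 (-0)) := h3.neg
    simpa [neg_mul] using h4

lemma tail_bound {z : ℝ} (hz : 0 < z) :
    ∫ t in Set.Ioi z, gaussianPDFReal 0 1 t ≤ gaussianPDFReal 0 1 z / z := by
  set c := (Real.sqrt (2 * π))⁻¹ with hc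
  have hc0 : 0 < c := by
    rw [hc]
    positivity
  have hint : Integrable (fun t : ℝ => t * Real.exp (-(1/2) * t ^ 2)) := by
    have := integrable_mul_exp_neg_mul_sq (b := (1/2 : ℝ)) (by norm_num)
    simpa [neg_mul] using this
  have step1 : ∫ t in Set.Ioi z, gaussianPDFReal 0 1 t
      ≤ ∫ t in Set.Ioi z, (c / z) * (t * Real.exp (-(1/2) * t ^ 2)) := by
    refine setIntegral_mono_on ((integrable_gaussianPDFReal 0 1).integrableOn)
      ((hint.const_mul _).integrableOn) measurableSet_Ioi ?_
    intro t ht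
    rw [gaussPDF01]
    have htz : z < t := ht
    have he : 0 < Real.exp (-(1/2) * t ^ 2) := Real.exp_pos _
    rw [div_mul_eq_mul_div, mul_comm t _, ← mul_assoc, mul_div_assoc]
    have : (1 : ℝ) ≤ t / z := (one_le_div hz).mpr htz.le
    nlinarith [mul_pos hc0 he]
  calc ∫ t in Set.Ioi z, gaussianPDFReal 0 1 t
      ≤ ∫ t in Set.Ioi z, (c / z) * (t * Real.exp (-(1/2) * t ^ 2)) := step1
    _ = (c / z) * ∫ t in Set.Ioi z, t * Real.exp (-(1/2) * t ^ 2) := by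
        rw [integral_const_mul]
    _ = (c / z) * Real.exp (-(1/2) * z ^ 2) := by rw [tail_int_aux]
    _ = gaussianPDFReal 0 1 z / z := by rw [gaussPDF01]; ring

lemma phi_div_lt {z : ℝ} (hz : 1 ≤ z) :
    gaussianPDFReal 0 1 z / z < 1 / (1 + z ^ 2) := by
  have hs2 : (2 : ℝ) ≤ Real.sqrt (2 * π) := by
    have h4 : Real.sqrt 4 ≤ Real.sqrt (2 * π) :=
      Real.sqrt_le_sqrt (by nlinarith [Real.pi_gt_three])
    have : Real.sqrt 4 = 2 := by
      rw [show (4:ℝ) = 2 ^ 2 by norm_num, Real.sqrt_sq (by norm_num)]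
    linarith
  have he : 1 + (1/2) * z ^ 2 ≤ Real.exp ((1/2) * z ^ 2) := by
    have := Real.add_one_le_exp ((1/2) * z ^ 2)
    linarith
  have hz0 : (0 : ℝ) < z := by linarith
  have hepos : 0 < Real.exp ((1/2) * z ^ 2) := Real.exp_pos _
  have hspos : (0:ℝ) < Real.sqrt (2 * π) := by linarith
  have key : 1 + z ^ 2 < Real.sqrt (2 * π) * z * Real.exp ((1/2) * z ^ 2) := by
    nlinarith [mul_pos hz0 hepos]
  have heq : gaussianPDFReal 0 1 z / z
      = 1 / (Real.sqrt (2 * π) * z * Real.exp ((1/2) * z ^ 2)) := by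
    rw [gaussPDF01, neg_mul, Real.exp_neg]
    field_simp
  rw [heq]
  apply one_div_lt_one_div_of_lt
  · positivity
  · exact key

/-- For `ε ∈ (0, 1/2)`, the Gaussian margin is strictly smaller than the distributionally
robust (Cantelli) margin: `Φ⁻¹(1−ε) < √((1−ε)/ε)`. -/
theorem stmt18 (ε : ℝ) (hε : ε ∈ Set.Ioo (0:ℝ) (1/2)) :
    PhiInv (1 - ε) < Real.sqrt ((1 - ε) / ε) := by
  obtain ⟨hε0, hε2⟩ := hε
  set s := Real.sqrt ((1 - ε) / ε) with hsdef
  have hratio : (1 : ℝ) < (1 - ε) / ε := by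
    rw [lt_div_iff₀ hε0]; linarith
  have hs1 : 1 < s := by
    have := Real.sqrt_lt_sqrt (zero_le_one) hratio
    simpa using this
  have hs0 : 0 < s := by linarith
  have hssq : s ^ 2 = (1 - ε) / ε := Real.sq_sqrt (by positivity)
  -- g s < ε
  have hgs : gaussianPDFReal 0 1 s / s < ε := by
    have h1 := phi_div_lt hs1.le
    have h2 : 1 / (1 + s ^ 2) = ε := by
      rw [hssq]
      field_simp
      ring
    linarith [h2 ▸ h1]
  -- find x₀ < s, 0 < x₀, with g x₀ < ε
  have hgcont : ContinuousAt (fun x : ℝ => gaussianPDFReal 0 1 x / x) s := by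
    have hc : Continuous (fun x : ℝ => gaussianPDFReal 0 1 x) := by
      simp only [gaussianPDFReal_def]
      fun_prop
    exact (hc.continuousAt).div continuousAt_id (ne_of_gt hs0)
  have hev1 : ∀ᶠ x in nhdsWithin s (Set.Iio s), gaussianPDFReal 0 1 x / x < ε :=
    (hgcont.continuousWithinAt.eventually_lt_const hgs)
  have hev2 : ∀ᶠ x in nhdsWithin s (Set.Iio s), 0 < x :=
    eventually_nhdsWithin_of_eventually_nhds (eventually_gt_nhds hs0)
  have hev3 : ∀ᶠ x in nhdsWithin s (Set.Iio s), x < s := eventually_mem_nhdsWithin.mono (fun x hx => hx)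
  obtain ⟨x₀, hg0, hx0pos, hx0lt⟩ := (hev1.and (hev2.and hev3)).exists
  -- CDF at x₀ exceeds 1 - ε
  have htail : ((gaussianReal 0 1) (Set.Ioi x₀)).toReal < ε := by
    rw [gaussianReal_apply_eq_integral 0 one_ne_zero,
      ENNReal.toReal_ofReal (integral_nonneg (fun t => gaussianPDFReal_nonneg 0 1 t))]
    calc ∫ t in Set.Ioi x₀, gaussianPDFReal 0 1 t ≤ gaussianPDFReal 0 1 x₀ / x₀ :=
          tail_bound hx0pos
      _ < ε := hg0
  have hcdf : 1 - ε < stdNormalCDF x₀ := by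
    have h1 : (gaussianReal 0 1) (Set.Iic x₀) = 1 - (gaussianReal 0 1) (Set.Ioi x₀) := by
      rw [← Set.compl_Ioi]
      exact prob_compl_eq_one_sub measurableSet_Ioi
    have hle : (gaussianReal 0 1) (Set.Ioi x₀) ≤ 1 := prob_le_one
    have h2 : ((gaussianReal 0 1) (Set.Iic x₀)).toReal
        = 1 - ((gaussianReal 0 1) (Set.Ioi x₀)).toReal := by
      rw [h1, ENNReal.toReal_sub_of_le hle (by norm_num)]
      simp
    rw [stdNormalCDF, ProbabilityTheory.cdf_eq_real, measureReal_def, h2]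
    linarith
  -- conclude
  have hsup : PhiInv (1 - ε) ≤ x₀ := by
    apply Real.sSup_le _ hx0pos.le
    intro x hx
    by_contra hxx
    push_neg at hxx
    have : stdNormalCDF x₀ ≤ stdNormalCDF x :=
      ProbabilityTheory.monotone_cdf _ hxx.le
    have hxmem : stdNormalCDF x ≤ 1 - ε := hx
    linarith
  linarith
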